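/- Let h, c, p, s be smooth functions of one variable, and define c_h, p_h, s_h and the D-operator as usual. Then, identically as differential polynomials, the variational derivative of H_h = ∫D_{(c,p,s)}(h)dx is E(D_{(c,p,s)}(h)) = h' + ε²·((1/2)c_h'(u)u_x² + c_h(u)u_xx) + ε⁴·(2p_h u_xxxx + 4p_h' u_x u_xxx + 2(p_h'' − 6s_h)u_x²u_xx + 3p_h' u_xx² − 3s_h' u_x⁴), and consequently the Hamiltonian perturbation u_t = ∂_x E(D_{(c,p,s)}(h)) is the explicit fifth-order PDE u_t = h''(u)u_x + ε²·∂_x((1/2)c_h'u_x² + c_h u_xx) + ε⁴·∂_x(2p_h u_xxxx + 4p_h' u_x u_xxx + 2(p_h'' − 6s_h)u_x²u_xx + 3p_h' u_xx² − 3s_h' u_x⁴), where all coefficient functions are evaluated at u. -/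

import Mathlib

open Set

noncomputable section

/-- Partial derivative of a jet density with respect to the k-th jet variable `u^(k)`. -/
def pderivJet (P : (ℕ → ℝ) → ℝ) (k : ℕ) (v : ℕ → ℝ) : ℝ :=
  deriv (fun y => P (Function.update v k y)) (v k)

/-- Total x-derivative of a jet density (no explicit x,t dependence). -/
def totalDer (P : (ℕ → ℝ) → ℝ) : (ℕ → ℝ) → ℝ :=
  fun v => ∑' k : ℕ, v (k + 1) * pderivJet P k v

/-- Euler-Lagrange operator `E(P) = Σ (-1)^k (d/dx)^k ∂P/∂u^(k)`. -/
def EulerOp (P : (ℕ → ℝ) → ℝ) : (ℕ → ℝ) → ℝ :=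
  fun v => ∑' k : ℕ, (-1 : ℝ) ^ k * (totalDer^[k] (pderivJet P k)) v

/-- Total x-derivative for densities with explicit x,t dependence. -/
def totalDerXT (P : ℝ → ℝ → (ℕ → ℝ) → ℝ) : ℝ → ℝ → (ℕ → ℝ) → ℝ :=
  fun x t v => deriv (fun y => P y t v) x + ∑' k : ℕ, v (k + 1) * pderivJet (P x t) k v

/-- Euler-Lagrange operator for densities with explicit x,t dependence. -/
def EulerOpXT (P : ℝ → ℝ → (ℕ → ℝ) → ℝ) : ℝ → ℝ → (ℕ → ℝ) → ℝ :=
  fun x t v => ∑' k : ℕ, (-1 : ℝ) ^ k *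
    (totalDerXT^[k] (fun x' t' w => pderivJet (P x' t') k w)) x t v

/-- The jet of a function of one variable at a point. -/
def jetsAt (w : ℝ → ℝ) (x : ℝ) : ℕ → ℝ := fun k => iteratedDeriv k w x

def cCoef (c h : ℝ → ℝ) (u : ℝ) : ℝ := c u * iteratedDeriv 3 h u

def pCoef (c p h : ℝ → ℝ) (u : ℝ) : ℝ :=
  p u * iteratedDeriv 3 h u + (3/10) * (c u)^2 * iteratedDeriv 4 h u

def sCoef (c p s h : ℝ → ℝ) (u : ℝ) : ℝ :=
  s u * iteratedDeriv 3 h u - (1/8) * c u * iteratedDeriv 2 c u * iteratedDeriv 4 h u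
    - (1/8) * c u * deriv c u * iteratedDeriv 5 h u - (1/24) * (c u)^2 * iteratedDeriv 6 h u
    - (1/6) * deriv p u * iteratedDeriv 4 h u - (1/6) * p u * iteratedDeriv 5 h u

/-- Dubrovin's D-operator. -/
def Dop (c p s h : ℝ → ℝ) (ε : ℝ) (v : ℕ → ℝ) : ℝ :=
  h (v 0) - ε^2/2 * cCoef c h (v 0) * (v 1)^2
    + ε^4 * (pCoef c p h (v 0) * (v 2)^2 + sCoef c p s h (v 0) * (v 1)^4)

/-- Conservation defect of a t-dependent family of densities along (eveq). -/
def consDefect (c p s h : ℝ → ℝ) (S : ℝ → ℝ → ℝ → (ℕ → ℝ) → ℝ) (ε x t : ℝ) (v : ℕ → ℝ) : ℝ :=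
  deriv (fun τ => EulerOpXT (S ε) x τ v) t
    + EulerOpXT (fun x' t' w => EulerOpXT (S ε) x' t' w * totalDer (EulerOp (Dop c p s h ε)) w) x t v

/-- Conservation up to order `O(ε^K)` along (eveq). -/
def ConservedUpTo (c p s h : ℝ → ℝ) (S : ℝ → ℝ → ℝ → (ℕ → ℝ) → ℝ) (K : ℕ) : Prop :=
  ∀ x t : ℝ, ∀ v : ℕ → ℝ, ∀ j < K, iteratedDeriv j (fun ε => consDefect c p s h S ε x t v) 0 = 0

lemma smooth_iter {f : ℝ → ℝ} (hf : ContDiff ℝ (⊤:ℕ∞) f) (n : ℕ) :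
    ContDiff ℝ (⊤:ℕ∞) (iteratedDeriv n f) := by
  rw [iteratedDeriv_eq_iterate]; exact hf.iterate_deriv n
-- ===== auxiliary infrastructure =====
lemma pd_eq' (P : (ℕ → ℝ) → ℝ) (k : ℕ) (v : ℕ → ℝ) (g : ℝ → ℝ)
    (hg : ∀ y, P (Function.update v k y) = g y) :
    pderivJet P k v = deriv g (v k) := by
  have h2 : (fun y => P (Function.update v k y)) = g := funext hg
  unfold pderivJet; rw [h2]

lemma pd_zero' (P : (ℕ → ℝ) → ℝ) (k : ℕ) (v : ℕ → ℝ)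
    (hg : ∀ y, P (Function.update v k y) = P v) :
    pderivJet P k v = 0 := by
  rw [pd_eq' P k v (fun _ => P v) hg]; simp

lemma totalDer_zero' : totalDer (fun _ => 0) = fun _ => 0 := by
  funext v
  have h : ∀ k : ℕ, pderivJet (fun _ => (0:ℝ)) k v = 0 := fun k => pd_zero' _ _ _ (fun _ => rfl)
  unfold totalDer; simp [h]

lemma totalDer_eq_sum (P : (ℕ → ℝ) → ℝ) (v : ℕ → ℝ) (N : ℕ)
    (h0 : ∀ k, N ≤ k → pderivJet P k v = 0) :
    totalDer P v = ∑ k ∈ Finset.range N, v (k + 1) * pderivJet P k v := by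
  unfold totalDer
  refine tsum_eq_sum ?_
  intro k hk
  rw [h0 k (not_lt.mp fun hlt => hk (Finset.mem_range.mpr hlt)), mul_zero]

lemma EulerOp_eq_sum (P : (ℕ → ℝ) → ℝ) (N : ℕ)
    (h0 : ∀ k, N ≤ k → pderivJet P k = fun _ => 0) (v : ℕ → ℝ) :
    EulerOp P v = ∑ k ∈ Finset.range N, (-1:ℝ)^k * (totalDer^[k] (pderivJet P k)) v := by
  unfold EulerOp
  refine tsum_eq_sum ?_
  intro k hk
  rw [h0 k (not_lt.mp fun hlt => hk (Finset.mem_range.mpr hlt)),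
    Function.iterate_fixed totalDer_zero' k]
  simp

lemma smooth_diff {f : ℝ → ℝ} (hf : ContDiff ℝ (⊤:ℕ∞) f) : Differentiable ℝ f :=
  hf.differentiable (by simp)

lemma smooth_deriv {f : ℝ → ℝ} (hf : ContDiff ℝ (⊤:ℕ∞) f) : ContDiff ℝ (⊤:ℕ∞) (deriv f) :=
  (contDiff_infty_iff_deriv.mp hf).2

lemma itder2 (f : ℝ → ℝ) : iteratedDeriv 2 f = deriv (deriv f) := by
  rw [show (2:ℕ) = 1 + 1 from rfl, iteratedDeriv_succ, iteratedDeriv_one]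
-- ===== generic density and part 1 =====
def Gdens (H C P S : ℝ → ℝ) (ε : ℝ) : (ℕ → ℝ) → ℝ := fun v =>
  H (v 0) - ε^2/2 * C (v 0) * (v 1)^2 + ε^4 * (P (v 0) * (v 2)^2 + S (v 0) * (v 1)^4)

def Q1d (C S : ℝ → ℝ) (ε : ℝ) : (ℕ → ℝ) → ℝ := fun w =>
  -(ε^2) * C (w 0) * w 1 + ε^4 * (4 * S (w 0) * (w 1)^3)

def Q2d (P : ℝ → ℝ) (ε : ℝ) : (ℕ → ℝ) → ℝ := fun w => ε^4 * (2 * P (w 0) * w 2)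

def Q3d (P : ℝ → ℝ) (ε : ℝ) : (ℕ → ℝ) → ℝ := fun w =>
  ε^4 * (2 * deriv P (w 0) * w 1 * w 2 + 2 * P (w 0) * w 3)

section Part1
variable (H C P S : ℝ → ℝ) (ε : ℝ)

lemma pdG0 (hH : Differentiable ℝ H) (hC : Differentiable ℝ C) (hP : Differentiable ℝ P)
    (hS : Differentiable ℝ S) (v : ℕ → ℝ) :
    pderivJet (Gdens H C P S ε) 0 v
      = deriv H (v 0) - ε^2/2 * deriv C (v 0) * (v 1)^2
        + ε^4 * (deriv P (v 0) * (v 2)^2 + deriv S (v 0) * (v 1)^4) := by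
  rw [pd_eq' _ 0 v
    (fun y => H y - ε^2/2 * C y * (v 1)^2 + ε^4 * (P y * (v 2)^2 + S y * (v 1)^4))
    (fun y => by simp [Gdens, Function.update_apply])]
  simp (disch := fun_prop) only [deriv_fun_add, deriv_fun_sub, deriv_fun_mul, deriv_const_mul,
    deriv_mul_const, deriv_pow_field, deriv_const', deriv_id'', deriv_const_mul_id']
  push_cast; ring

lemma pdG1 (v : ℕ → ℝ) : pderivJet (Gdens H C P S ε) 1 v = Q1d C S ε v := by
  rw [pd_eq' _ 1 v
    (fun y => H (v 0) - ε^2/2 * C (v 0) * y^2 + ε^4 * (P (v 0) * (v 2)^2 + S (v 0) * y^4))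
    (fun y => by simp [Gdens, Function.update_apply])]
  simp (disch := fun_prop) only [deriv_fun_add, deriv_fun_sub, deriv_fun_mul, deriv_const_mul,
    deriv_mul_const, deriv_pow_field, deriv_const', deriv_id'', deriv_const_mul_id']
  show _ = Q1d C S ε v
  simp only [Q1d]; push_cast; ring

lemma pdG2 (v : ℕ → ℝ) : pderivJet (Gdens H C P S ε) 2 v = Q2d P ε v := by
  rw [pd_eq' _ 2 v
    (fun y => H (v 0) - ε^2/2 * C (v 0) * (v 1)^2 + ε^4 * (P (v 0) * y^2 + S (v 0) * (v 1)^4))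
    (fun y => by simp [Gdens, Function.update_apply])]
  simp (disch := fun_prop) only [deriv_fun_add, deriv_fun_sub, deriv_fun_mul, deriv_const_mul,
    deriv_mul_const, deriv_pow_field, deriv_const', deriv_id'', deriv_const_mul_id']
  show _ = Q2d P ε v
  simp only [Q2d]; push_cast; ring

lemma pdG_van (k : ℕ) (hk : 3 ≤ k) : pderivJet (Gdens H C P S ε) k = fun _ => 0 := by
  funext v
  refine pd_zero' _ _ _ (fun y => ?_)
  have h0 : ¬ ((0:ℕ) = k) := by omega
  have h1 : ¬ ((1:ℕ) = k) := by omega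
  have h2 : ¬ ((2:ℕ) = k) := by omega
  simp [Gdens, Function.update_apply, h0, h1, h2]
end Part1
section Part1b
variable (H C P S : ℝ → ℝ) (ε : ℝ)

lemma tdQ1 (hC : Differentiable ℝ C) (hS : Differentiable ℝ S) (v : ℕ → ℝ) :
    totalDer (Q1d C S ε) v
      = -(ε^2) * (deriv C (v 0) * (v 1)^2 + C (v 0) * v 2)
        + ε^4 * (4 * deriv S (v 0) * (v 1)^4 + 12 * S (v 0) * (v 1)^2 * v 2) := by
  have pd0 : pderivJet (Q1d C S ε) 0 v
      = -(ε^2) * deriv C (v 0) * v 1 + ε^4 * (4 * deriv S (v 0) * (v 1)^3) := by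
    rw [pd_eq' _ 0 v (fun y => -(ε^2) * C y * v 1 + ε^4 * (4 * S y * (v 1)^3))
      (fun y => by simp [Q1d, Function.update_apply])]
    simp (disch := fun_prop) only [deriv_fun_add, deriv_fun_sub, deriv_fun_mul, deriv_const_mul,
      deriv_mul_const, deriv_pow_field, deriv_const', deriv_id'', deriv_const_mul_id']
    ring
  have pd1 : pderivJet (Q1d C S ε) 1 v
      = -(ε^2) * C (v 0) + ε^4 * (12 * S (v 0) * (v 1)^2) := by
    rw [pd_eq' _ 1 v (fun y => -(ε^2) * C (v 0) * y + ε^4 * (4 * S (v 0) * y^3))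
      (fun y => by simp [Q1d, Function.update_apply])]
    simp (disch := fun_prop) only [deriv_fun_add, deriv_fun_sub, deriv_fun_mul, deriv_const_mul,
      deriv_mul_const, deriv_pow_field, deriv_const', deriv_id'', deriv_const_mul_id']
    push_cast; ring
  have hvan : ∀ k, 2 ≤ k → pderivJet (Q1d C S ε) k v = 0 := by
    intro k hk
    refine pd_zero' _ _ _ (fun y => ?_)
    have h0 : ¬ ((0:ℕ) = k) := by omega
    have h1 : ¬ ((1:ℕ) = k) := by omega
    simp [Q1d, Function.update_apply, h0, h1]
  rw [totalDer_eq_sum _ v 2 hvan, Finset.sum_range_succ, Finset.sum_range_one, pd0, pd1]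
  ring

lemma tdQ2 (hP : Differentiable ℝ P) : totalDer (Q2d P ε) = Q3d P ε := by
  funext v
  have pd0 : pderivJet (Q2d P ε) 0 v = ε^4 * (2 * deriv P (v 0) * v 2) := by
    rw [pd_eq' _ 0 v (fun y => ε^4 * (2 * P y * v 2))
      (fun y => by simp [Q2d, Function.update_apply])]
    simp (disch := fun_prop) only [deriv_fun_add, deriv_fun_sub, deriv_fun_mul, deriv_const_mul,
      deriv_mul_const, deriv_pow_field, deriv_const', deriv_id'', deriv_const_mul_id']
    ring
  have pd2 : pderivJet (Q2d P ε) 2 v = ε^4 * (2 * P (v 0)) := by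
    rw [pd_eq' _ 2 v (fun y => ε^4 * (2 * P (v 0) * y))
      (fun y => by simp [Q2d, Function.update_apply])]
    simp (disch := fun_prop) only [deriv_fun_add, deriv_fun_sub, deriv_fun_mul, deriv_const_mul,
      deriv_mul_const, deriv_pow_field, deriv_const', deriv_id'', deriv_const_mul_id']
    ring
  have pd1 : pderivJet (Q2d P ε) 1 v = 0 := by
    refine pd_zero' _ _ _ (fun y => ?_)
    simp [Q2d, Function.update_apply]
  have hvan : ∀ k, 3 ≤ k → pderivJet (Q2d P ε) k v = 0 := by
    intro k hk
    refine pd_zero' _ _ _ (fun y => ?_)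
    have h0 : ¬ ((0:ℕ) = k) := by omega
    have h2 : ¬ ((2:ℕ) = k) := by omega
    simp [Q2d, Function.update_apply, h0, h2]
  rw [totalDer_eq_sum _ v 3 hvan, Finset.sum_range_succ, Finset.sum_range_succ,
    Finset.sum_range_one, pd0, pd1, pd2]
  show _ = Q3d P ε v
  simp only [Q3d]; ring

lemma tdQ3 (hP : Differentiable ℝ P) (hP1 : Differentiable ℝ (deriv P)) (v : ℕ → ℝ) :
    totalDer (Q3d P ε) v
      = ε^4 * (2 * deriv (deriv P) (v 0) * (v 1)^2 * v 2 + 4 * deriv P (v 0) * v 1 * v 3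
          + 2 * deriv P (v 0) * (v 2)^2 + 2 * P (v 0) * v 4) := by
  have pd0 : pderivJet (Q3d P ε) 0 v
      = ε^4 * (2 * deriv (deriv P) (v 0) * v 1 * v 2 + 2 * deriv P (v 0) * v 3) := by
    rw [pd_eq' _ 0 v (fun y => ε^4 * (2 * deriv P y * v 1 * v 2 + 2 * P y * v 3))
      (fun y => by simp [Q3d, Function.update_apply])]
    simp (disch := fun_prop) only [deriv_fun_add, deriv_fun_sub, deriv_fun_mul, deriv_const_mul,
      deriv_mul_const, deriv_pow_field, deriv_const', deriv_id'', deriv_const_mul_id']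
    ring
  have pd1 : pderivJet (Q3d P ε) 1 v = ε^4 * (2 * deriv P (v 0) * v 2) := by
    rw [pd_eq' _ 1 v (fun y => ε^4 * (2 * deriv P (v 0) * y * v 2 + 2 * P (v 0) * v 3))
      (fun y => by simp [Q3d, Function.update_apply])]
    simp (disch := fun_prop) only [deriv_fun_add, deriv_fun_sub, deriv_fun_mul, deriv_const_mul,
      deriv_mul_const, deriv_pow_field, deriv_const', deriv_id'', deriv_const_mul_id']
    ring
  have pd2 : pderivJet (Q3d P ε) 2 v = ε^4 * (2 * deriv P (v 0) * v 1) := by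
    rw [pd_eq' _ 2 v (fun y => ε^4 * (2 * deriv P (v 0) * v 1 * y + 2 * P (v 0) * v 3))
      (fun y => by simp [Q3d, Function.update_apply])]
    simp (disch := fun_prop) only [deriv_fun_add, deriv_fun_sub, deriv_fun_mul, deriv_const_mul,
      deriv_mul_const, deriv_pow_field, deriv_const', deriv_id'', deriv_const_mul_id']
    ring
  have pd3 : pderivJet (Q3d P ε) 3 v = ε^4 * (2 * P (v 0)) := by
    rw [pd_eq' _ 3 v (fun y => ε^4 * (2 * deriv P (v 0) * v 1 * v 2 + 2 * P (v 0) * y))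
      (fun y => by simp [Q3d, Function.update_apply])]
    simp (disch := fun_prop) only [deriv_fun_add, deriv_fun_sub, deriv_fun_mul, deriv_const_mul,
      deriv_mul_const, deriv_pow_field, deriv_const', deriv_id'', deriv_const_mul_id']
    ring
  have hvan : ∀ k, 4 ≤ k → pderivJet (Q3d P ε) k v = 0 := by
    intro k hk
    refine pd_zero' _ _ _ (fun y => ?_)
    have h0 : ¬ ((0:ℕ) = k) := by omega
    have h1 : ¬ ((1:ℕ) = k) := by omega
    have h2 : ¬ ((2:ℕ) = k) := by omega
    have h3 : ¬ ((3:ℕ) = k) := by omega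
    simp [Q3d, Function.update_apply, h0, h1, h2, h3]
  rw [totalDer_eq_sum _ v 4 hvan, Finset.sum_range_succ, Finset.sum_range_succ,
    Finset.sum_range_succ, Finset.sum_range_one, pd0, pd1, pd2, pd3]
  ring
end Part1b
theorem EulerOp_G (H C P S : ℝ → ℝ) (ε : ℝ)
    (hH : Differentiable ℝ H) (hC : Differentiable ℝ C) (hP : Differentiable ℝ P)
    (hS : Differentiable ℝ S) (hP1 : Differentiable ℝ (deriv P)) (v : ℕ → ℝ) :
    EulerOp (Gdens H C P S ε) v
      = deriv H (v 0)
        + ε^2 * ((1/2) * deriv C (v 0) * (v 1)^2 + C (v 0) * v 2)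
        + ε^4 * (2 * P (v 0) * v 4
            + 4 * deriv P (v 0) * v 1 * v 3
            + 2 * (deriv (deriv P) (v 0) - 6 * S (v 0)) * (v 1)^2 * v 2
            + 3 * deriv P (v 0) * (v 2)^2
            - 3 * deriv S (v 0) * (v 1)^4) := by
  have e1 : pderivJet (Gdens H C P S ε) 1 = Q1d C S ε := funext (pdG1 H C P S ε)
  have e2 : pderivJet (Gdens H C P S ε) 2 = Q2d P ε := funext (pdG2 H C P S ε)
  rw [EulerOp_eq_sum _ 3 (pdG_van H C P S ε) v, Finset.sum_range_succ, Finset.sum_range_succ,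
    Finset.sum_range_one,
    show totalDer^[0] (pderivJet (Gdens H C P S ε) 0) = pderivJet (Gdens H C P S ε) 0 from rfl,
    show totalDer^[1] (pderivJet (Gdens H C P S ε) 1)
        = totalDer (pderivJet (Gdens H C P S ε) 1) from rfl,
    show totalDer^[2] (pderivJet (Gdens H C P S ε) 2)
        = totalDer (totalDer (pderivJet (Gdens H C P S ε) 2)) from rfl,
    e1, e2, tdQ2 P ε hP, pdG0 H C P S ε hH hC hP hS v, tdQ1 C S ε hC hS v,
    tdQ3 P ε hP hP1 v]
  norm_num
  ring
-- ===== part 2 densities =====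
def A2d (C : ℝ → ℝ) : (ℕ → ℝ) → ℝ := fun w =>
  (1/2) * deriv C (w 0) * (w 1)^2 + C (w 0) * w 2

def A4d (P S : ℝ → ℝ) : (ℕ → ℝ) → ℝ := fun w =>
  2 * P (w 0) * w 4 + 4 * deriv P (w 0) * w 1 * w 3
    + 2 * (deriv (deriv P) (w 0) - 6 * S (w 0)) * (w 1)^2 * w 2
    + 3 * deriv P (w 0) * (w 2)^2 - 3 * deriv S (w 0) * (w 1)^4

def Fd (H C P S : ℝ → ℝ) (ε : ℝ) : (ℕ → ℝ) → ℝ := fun w =>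
  deriv H (w 0) + ε^2 * A2d C w + ε^4 * A4d P S w

section Part2
variable (H C P S : ℝ → ℝ) (ε : ℝ)

lemma tdA2 (hC : Differentiable ℝ C) (hC1 : Differentiable ℝ (deriv C)) (v : ℕ → ℝ) :
    totalDer (A2d C) v
      = v 1 * ((1/2) * deriv (deriv C) (v 0) * (v 1)^2 + deriv C (v 0) * v 2)
        + v 2 * (deriv C (v 0) * v 1) + v 3 * C (v 0) := by
  have pd0 : pderivJet (A2d C) 0 v
      = (1/2) * deriv (deriv C) (v 0) * (v 1)^2 + deriv C (v 0) * v 2 := by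
    rw [pd_eq' _ 0 v (fun y => (1/2) * deriv C y * (v 1)^2 + C y * v 2)
      (fun y => by simp [A2d, Function.update_apply])]
    simp (disch := fun_prop) only [deriv_fun_add, deriv_fun_sub, deriv_fun_mul, deriv_const_mul,
      deriv_mul_const, deriv_pow_field, deriv_const', deriv_id'', deriv_const_mul_id']
    ring
  have pd1 : pderivJet (A2d C) 1 v = deriv C (v 0) * v 1 := by
    rw [pd_eq' _ 1 v (fun y => (1/2) * deriv C (v 0) * y^2 + C (v 0) * v 2)
      (fun y => by simp [A2d, Function.update_apply])]
    simp (disch := fun_prop) only [deriv_fun_add, deriv_fun_sub, deriv_fun_mul, deriv_const_mul,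
      deriv_mul_const, deriv_pow_field, deriv_const', deriv_id'', deriv_const_mul_id']
    push_cast; ring
  have pd2 : pderivJet (A2d C) 2 v = C (v 0) := by
    rw [pd_eq' _ 2 v (fun y => (1/2) * deriv C (v 0) * (v 1)^2 + C (v 0) * y)
      (fun y => by simp [A2d, Function.update_apply])]
    simp (disch := fun_prop) only [deriv_fun_add, deriv_fun_sub, deriv_fun_mul, deriv_const_mul,
      deriv_mul_const, deriv_pow_field, deriv_const', deriv_id'', deriv_const_mul_id']
    ring
  have hvan : ∀ k, 3 ≤ k → pderivJet (A2d C) k v = 0 := by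
    intro k hk
    refine pd_zero' _ _ _ (fun y => ?_)
    have h0 : ¬ ((0:ℕ) = k) := by omega
    have h1 : ¬ ((1:ℕ) = k) := by omega
    have h2 : ¬ ((2:ℕ) = k) := by omega
    simp [A2d, Function.update_apply, h0, h1, h2]
  rw [totalDer_eq_sum _ v 3 hvan]
  simp only [Finset.sum_range_succ, Finset.sum_range_zero, zero_add, pd0, pd1, pd2]

lemma tdA4 (hP : Differentiable ℝ P) (hP1 : Differentiable ℝ (deriv P))
    (hP2 : Differentiable ℝ (deriv (deriv P)))
    (hS : Differentiable ℝ S) (hS1 : Differentiable ℝ (deriv S)) (v : ℕ → ℝ) :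
    totalDer (A4d P S) v
      = v 1 * (2 * deriv P (v 0) * v 4 + 4 * deriv (deriv P) (v 0) * v 1 * v 3
            + 2 * (deriv (deriv (deriv P)) (v 0) - 6 * deriv S (v 0)) * (v 1)^2 * v 2
            + 3 * deriv (deriv P) (v 0) * (v 2)^2 - 3 * deriv (deriv S) (v 0) * (v 1)^4)
        + v 2 * (4 * deriv P (v 0) * v 3
            + 4 * (deriv (deriv P) (v 0) - 6 * S (v 0)) * v 1 * v 2
            - 12 * deriv S (v 0) * (v 1)^3)
        + v 3 * (2 * (deriv (deriv P) (v 0) - 6 * S (v 0)) * (v 1)^2 + 6 * deriv P (v 0) * v 2)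
        + v 4 * (4 * deriv P (v 0) * v 1)
        + v 5 * (2 * P (v 0)) := by
  have pd0 : pderivJet (A4d P S) 0 v
      = 2 * deriv P (v 0) * v 4 + 4 * deriv (deriv P) (v 0) * v 1 * v 3
          + 2 * (deriv (deriv (deriv P)) (v 0) - 6 * deriv S (v 0)) * (v 1)^2 * v 2
          + 3 * deriv (deriv P) (v 0) * (v 2)^2 - 3 * deriv (deriv S) (v 0) * (v 1)^4 := by
    rw [pd_eq' _ 0 v (fun y => 2 * P y * v 4 + 4 * deriv P y * v 1 * v 3
        + 2 * (deriv (deriv P) y - 6 * S y) * (v 1)^2 * v 2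
        + 3 * deriv P y * (v 2)^2 - 3 * deriv S y * (v 1)^4)
      (fun y => by simp [A4d, Function.update_apply])]
    simp (disch := fun_prop) only [deriv_fun_add, deriv_fun_sub, deriv_fun_mul, deriv_const_mul,
      deriv_mul_const, deriv_pow_field, deriv_const', deriv_id'', deriv_const_mul_id']
    ring
  have pd1 : pderivJet (A4d P S) 1 v
      = 4 * deriv P (v 0) * v 3 + 4 * (deriv (deriv P) (v 0) - 6 * S (v 0)) * v 1 * v 2
          - 12 * deriv S (v 0) * (v 1)^3 := by
    rw [pd_eq' _ 1 v (fun y => 2 * P (v 0) * v 4 + 4 * deriv P (v 0) * y * v 3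
        + 2 * (deriv (deriv P) (v 0) - 6 * S (v 0)) * y^2 * v 2
        + 3 * deriv P (v 0) * (v 2)^2 - 3 * deriv S (v 0) * y^4)
      (fun y => by simp [A4d, Function.update_apply])]
    simp (disch := fun_prop) only [deriv_fun_add, deriv_fun_sub, deriv_fun_mul, deriv_const_mul,
      deriv_mul_const, deriv_pow_field, deriv_const', deriv_id'', deriv_const_mul_id']
    push_cast; ring
  have pd2 : pderivJet (A4d P S) 2 v
      = 2 * (deriv (deriv P) (v 0) - 6 * S (v 0)) * (v 1)^2 + 6 * deriv P (v 0) * v 2 := by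
    rw [pd_eq' _ 2 v (fun y => 2 * P (v 0) * v 4 + 4 * deriv P (v 0) * v 1 * v 3
        + 2 * (deriv (deriv P) (v 0) - 6 * S (v 0)) * (v 1)^2 * y
        + 3 * deriv P (v 0) * y^2 - 3 * deriv S (v 0) * (v 1)^4)
      (fun y => by simp [A4d, Function.update_apply])]
    simp (disch := fun_prop) only [deriv_fun_add, deriv_fun_sub, deriv_fun_mul, deriv_const_mul,
      deriv_mul_const, deriv_pow_field, deriv_const', deriv_id'', deriv_const_mul_id']
    push_cast; ring
  have pd3 : pderivJet (A4d P S) 3 v = 4 * deriv P (v 0) * v 1 := by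
    rw [pd_eq' _ 3 v (fun y => 2 * P (v 0) * v 4 + 4 * deriv P (v 0) * v 1 * y
        + 2 * (deriv (deriv P) (v 0) - 6 * S (v 0)) * (v 1)^2 * v 2
        + 3 * deriv P (v 0) * (v 2)^2 - 3 * deriv S (v 0) * (v 1)^4)
      (fun y => by simp [A4d, Function.update_apply])]
    simp (disch := fun_prop) only [deriv_fun_add, deriv_fun_sub, deriv_fun_mul, deriv_const_mul,
      deriv_mul_const, deriv_pow_field, deriv_const', deriv_id'', deriv_const_mul_id']
    ring
  have pd4 : pderivJet (A4d P S) 4 v = 2 * P (v 0) := by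
    rw [pd_eq' _ 4 v (fun y => 2 * P (v 0) * y + 4 * deriv P (v 0) * v 1 * v 3
        + 2 * (deriv (deriv P) (v 0) - 6 * S (v 0)) * (v 1)^2 * v 2
        + 3 * deriv P (v 0) * (v 2)^2 - 3 * deriv S (v 0) * (v 1)^4)
      (fun y => by simp [A4d, Function.update_apply])]
    simp (disch := fun_prop) only [deriv_fun_add, deriv_fun_sub, deriv_fun_mul, deriv_const_mul,
      deriv_mul_const, deriv_pow_field, deriv_const', deriv_id'', deriv_const_mul_id']
    ring
  have hvan : ∀ k, 5 ≤ k → pderivJet (A4d P S) k v = 0 := by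
    intro k hk
    refine pd_zero' _ _ _ (fun y => ?_)
    have h0 : ¬ ((0:ℕ) = k) := by omega
    have h1 : ¬ ((1:ℕ) = k) := by omega
    have h2 : ¬ ((2:ℕ) = k) := by omega
    have h3 : ¬ ((3:ℕ) = k) := by omega
    have h4 : ¬ ((4:ℕ) = k) := by omega
    simp [A4d, Function.update_apply, h0, h1, h2, h3, h4]
  rw [totalDer_eq_sum _ v 5 hvan]
  simp only [Finset.sum_range_succ, Finset.sum_range_zero, zero_add, pd0, pd1, pd2, pd3, pd4]
end Part2
theorem totalDer_F (H C P S : ℝ → ℝ) (ε : ℝ)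
    (hH1 : Differentiable ℝ (deriv H))
    (hC : Differentiable ℝ C) (hC1 : Differentiable ℝ (deriv C))
    (hP : Differentiable ℝ P) (hP1 : Differentiable ℝ (deriv P))
    (hP2 : Differentiable ℝ (deriv (deriv P)))
    (hS : Differentiable ℝ S) (hS1 : Differentiable ℝ (deriv S)) (v : ℕ → ℝ) :
    totalDer (Fd H C P S ε) v
      = deriv (deriv H) (v 0) * v 1 + ε^2 * totalDer (A2d C) v
        + ε^4 * totalDer (A4d P S) v := by
  have pd0 : pderivJet (Fd H C P S ε) 0 v
      = deriv (deriv H) (v 0)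
        + ε^2 * ((1/2) * deriv (deriv C) (v 0) * (v 1)^2 + deriv C (v 0) * v 2)
        + ε^4 * (2 * deriv P (v 0) * v 4 + 4 * deriv (deriv P) (v 0) * v 1 * v 3
            + 2 * (deriv (deriv (deriv P)) (v 0) - 6 * deriv S (v 0)) * (v 1)^2 * v 2
            + 3 * deriv (deriv P) (v 0) * (v 2)^2 - 3 * deriv (deriv S) (v 0) * (v 1)^4) := by
    rw [pd_eq' _ 0 v (fun y => deriv H y
        + ε^2 * ((1/2) * deriv C y * (v 1)^2 + C y * v 2)
        + ε^4 * (2 * P y * v 4 + 4 * deriv P y * v 1 * v 3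
            + 2 * (deriv (deriv P) y - 6 * S y) * (v 1)^2 * v 2
            + 3 * deriv P y * (v 2)^2 - 3 * deriv S y * (v 1)^4))
      (fun y => by simp [Fd, A2d, A4d, Function.update_apply])]
    simp (disch := fun_prop) only [deriv_fun_add, deriv_fun_sub, deriv_fun_mul, deriv_const_mul,
      deriv_mul_const, deriv_pow_field, deriv_const', deriv_id'', deriv_const_mul_id']
    ring
  have pd1 : pderivJet (Fd H C P S ε) 1 v
      = ε^2 * (deriv C (v 0) * v 1)
        + ε^4 * (4 * deriv P (v 0) * v 3
            + 4 * (deriv (deriv P) (v 0) - 6 * S (v 0)) * v 1 * v 2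
            - 12 * deriv S (v 0) * (v 1)^3) := by
    rw [pd_eq' _ 1 v (fun y => deriv H (v 0)
        + ε^2 * ((1/2) * deriv C (v 0) * y^2 + C (v 0) * v 2)
        + ε^4 * (2 * P (v 0) * v 4 + 4 * deriv P (v 0) * y * v 3
            + 2 * (deriv (deriv P) (v 0) - 6 * S (v 0)) * y^2 * v 2
            + 3 * deriv P (v 0) * (v 2)^2 - 3 * deriv S (v 0) * y^4))
      (fun y => by simp [Fd, A2d, A4d, Function.update_apply])]
    simp (disch := fun_prop) only [deriv_fun_add, deriv_fun_sub, deriv_fun_mul, deriv_const_mul,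
      deriv_mul_const, deriv_pow_field, deriv_const', deriv_id'', deriv_const_mul_id']
    push_cast; ring
  have pd2 : pderivJet (Fd H C P S ε) 2 v
      = ε^2 * C (v 0)
        + ε^4 * (2 * (deriv (deriv P) (v 0) - 6 * S (v 0)) * (v 1)^2
            + 6 * deriv P (v 0) * v 2) := by
    rw [pd_eq' _ 2 v (fun y => deriv H (v 0)
        + ε^2 * ((1/2) * deriv C (v 0) * (v 1)^2 + C (v 0) * y)
        + ε^4 * (2 * P (v 0) * v 4 + 4 * deriv P (v 0) * v 1 * v 3
            + 2 * (deriv (deriv P) (v 0) - 6 * S (v 0)) * (v 1)^2 * y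
            + 3 * deriv P (v 0) * y^2 - 3 * deriv S (v 0) * (v 1)^4))
      (fun y => by simp [Fd, A2d, A4d, Function.update_apply])]
    simp (disch := fun_prop) only [deriv_fun_add, deriv_fun_sub, deriv_fun_mul, deriv_const_mul,
      deriv_mul_const, deriv_pow_field, deriv_const', deriv_id'', deriv_const_mul_id']
    push_cast; ring
  have pd3 : pderivJet (Fd H C P S ε) 3 v = ε^4 * (4 * deriv P (v 0) * v 1) := by
    rw [pd_eq' _ 3 v (fun y => deriv H (v 0)
        + ε^2 * ((1/2) * deriv C (v 0) * (v 1)^2 + C (v 0) * v 2)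
        + ε^4 * (2 * P (v 0) * v 4 + 4 * deriv P (v 0) * v 1 * y
            + 2 * (deriv (deriv P) (v 0) - 6 * S (v 0)) * (v 1)^2 * v 2
            + 3 * deriv P (v 0) * (v 2)^2 - 3 * deriv S (v 0) * (v 1)^4))
      (fun y => by simp [Fd, A2d, A4d, Function.update_apply])]
    simp (disch := fun_prop) only [deriv_fun_add, deriv_fun_sub, deriv_fun_mul, deriv_const_mul,
      deriv_mul_const, deriv_pow_field, deriv_const', deriv_id'', deriv_const_mul_id']
    ring
  have pd4 : pderivJet (Fd H C P S ε) 4 v = ε^4 * (2 * P (v 0)) := by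
    rw [pd_eq' _ 4 v (fun y => deriv H (v 0)
        + ε^2 * ((1/2) * deriv C (v 0) * (v 1)^2 + C (v 0) * v 2)
        + ε^4 * (2 * P (v 0) * y + 4 * deriv P (v 0) * v 1 * v 3
            + 2 * (deriv (deriv P) (v 0) - 6 * S (v 0)) * (v 1)^2 * v 2
            + 3 * deriv P (v 0) * (v 2)^2 - 3 * deriv S (v 0) * (v 1)^4))
      (fun y => by simp [Fd, A2d, A4d, Function.update_apply])]
    simp (disch := fun_prop) only [deriv_fun_add, deriv_fun_sub, deriv_fun_mul, deriv_const_mul,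
      deriv_mul_const, deriv_pow_field, deriv_const', deriv_id'', deriv_const_mul_id']
    ring
  have hvan : ∀ k, 5 ≤ k → pderivJet (Fd H C P S ε) k v = 0 := by
    intro k hk
    refine pd_zero' _ _ _ (fun y => ?_)
    have h0 : ¬ ((0:ℕ) = k) := by omega
    have h1 : ¬ ((1:ℕ) = k) := by omega
    have h2 : ¬ ((2:ℕ) = k) := by omega
    have h3 : ¬ ((3:ℕ) = k) := by omega
    have h4 : ¬ ((4:ℕ) = k) := by omega
    simp [Fd, A2d, A4d, Function.update_apply, h0, h1, h2, h3, h4]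
  rw [totalDer_eq_sum _ v 5 hvan]
  simp only [Finset.sum_range_succ, Finset.sum_range_zero, zero_add, pd0, pd1, pd2, pd3, pd4]
  rw [tdA2 C hC hC1 v, tdA4 P S hP hP1 hP2 hS hS1 v]
  ring

/-- the explicit form of the variational derivative `E(D_{(c,p,s)}(h))` and of
the Hamiltonian perturbation `u_t = ∂_x E(D_{(c,p,s)}(h))`. -/
theorem explicit_euler_lagrange_of_Dop
    (h c p s : ℝ → ℝ)
    (hh : ContDiff ℝ (⊤ : ℕ∞) h) (hc : ContDiff ℝ (⊤ : ℕ∞) c)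
    (hp : ContDiff ℝ (⊤ : ℕ∞) p) (hs : ContDiff ℝ (⊤ : ℕ∞) s) :
    (∀ (ε : ℝ) (v : ℕ → ℝ),
      EulerOp (Dop c p s h ε) v
        = deriv h (v 0)
          + ε^2 * ((1/2) * deriv (cCoef c h) (v 0) * (v 1)^2 + cCoef c h (v 0) * v 2)
          + ε^4 * (2 * pCoef c p h (v 0) * v 4
              + 4 * deriv (pCoef c p h) (v 0) * v 1 * v 3
              + 2 * (iteratedDeriv 2 (pCoef c p h) (v 0) - 6 * sCoef c p s h (v 0)) * (v 1)^2 * v 2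
              + 3 * deriv (pCoef c p h) (v 0) * (v 2)^2
              - 3 * deriv (sCoef c p s h) (v 0) * (v 1)^4))
    ∧ (∀ (ε : ℝ) (v : ℕ → ℝ),
      totalDer (EulerOp (Dop c p s h ε)) v
        = iteratedDeriv 2 h (v 0) * v 1
          + ε^2 * totalDer (fun w =>
              (1/2) * deriv (cCoef c h) (w 0) * (w 1)^2 + cCoef c h (w 0) * w 2) v
          + ε^4 * totalDer (fun w =>
              2 * pCoef c p h (w 0) * w 4
              + 4 * deriv (pCoef c p h) (w 0) * w 1 * w 3
              + 2 * (iteratedDeriv 2 (pCoef c p h) (w 0) - 6 * sCoef c p s h (w 0)) * (w 1)^2 * w 2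
              + 3 * deriv (pCoef c p h) (w 0) * (w 2)^2
              - 3 * deriv (sCoef c p s h) (w 0) * (w 1)^4) v) := by
  have hCc : ContDiff ℝ (⊤:ℕ∞) (cCoef c h) := hc.mul (smooth_iter hh 3)
  have hPc : ContDiff ℝ (⊤:ℕ∞) (pCoef c p h) :=
    (hp.mul (smooth_iter hh 3)).add ((contDiff_const.mul (hc.pow 2)).mul (smooth_iter hh 4))
  have hSc : ContDiff ℝ (⊤:ℕ∞) (sCoef c p s h) :=
    (((((hs.mul (smooth_iter hh 3)).sub
      (((contDiff_const.mul hc).mul (smooth_iter hc 2)).mul (smooth_iter hh 4))).sub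
      (((contDiff_const.mul hc).mul (smooth_deriv hc)).mul (smooth_iter hh 5))).sub
      ((contDiff_const.mul (hc.pow 2)).mul (smooth_iter hh 6))).sub
      ((contDiff_const.mul (smooth_deriv hp)).mul (smooth_iter hh 4))).sub
      ((contDiff_const.mul hp).mul (smooth_iter hh 5))
  have dH := smooth_diff hh
  have dH1 := smooth_diff (smooth_deriv hh)
  have dC := smooth_diff hCc
  have dC1 := smooth_diff (smooth_deriv hCc)
  have dP := smooth_diff hPc
  have dP1 := smooth_diff (smooth_deriv hPc)
  have dP2 := smooth_diff (smooth_deriv (smooth_deriv hPc))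
  have dS := smooth_diff hSc
  have dS1 := smooth_diff (smooth_deriv hSc)
  refine ⟨fun ε v => ?_, fun ε v => ?_⟩
  · rw [itder2]
    exact EulerOp_G h (cCoef c h) (pCoef c p h) (sCoef c p s h) ε dH dC dP dS dP1 v
  · have hEF : EulerOp (Dop c p s h ε) = Fd h (cCoef c h) (pCoef c p h) (sCoef c p s h) ε :=
      funext fun w => EulerOp_G h (cCoef c h) (pCoef c p h) (sCoef c p s h) ε dH dC dP dS dP1 w
    rw [hEF, itder2 h, itder2 (pCoef c p h)]
    exact totalDer_F h (cCoef c h) (pCoef c p h) (sCoef c p s h) ε dH1 dC dC1 dP dP1 dP2 dS dS1 v
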